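/- arXiv:2411.05464 — 3 statements merged into one kernel-verified Lean document; each statement's English description precedes it below -/
import Mathlib

section
/- Let X and Y be finite sets, A and C be discrete sets, and φ_a: X → A, φ_b: Y → C be maps; let φ = φ_a × φ_b. Let μ be a measure on X and ν a measure on Y with ‖μ‖ ≤ ‖ν‖. Then the pushforward under φ of the set of (unbalanced) couplings between μ and ν equals the set of (unbalanced) couplings between (φ_a)_*μ and (φ_b)_*ν; that is, {φ_*γ : γ ∈ Γ(μ,ν)} = Γ((φ_a)_*μ, (φ_b)_*ν). -/
open MeasureTheory

section helpers
lemma myMapSum {α β ι : Type*} [MeasurableSpace α] [MeasurableSpace β]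
    {f : α → β} (hf : Measurable f) (s : Finset ι) (μ : ι → Measure α) :
    (∑ i ∈ s, μ i).map f = ∑ i ∈ s, (μ i).map f := by
  ext t ht
  rw [Measure.map_apply hf ht, Measure.finset_sum_apply, Measure.finset_sum_apply]
  exact Finset.sum_congr rfl fun i _ => (Measure.map_apply hf ht).symm

lemma myMapRestrict {α β : Type*} [MeasurableSpace α] [MeasurableSpace β]
    [MeasurableSingletonClass β] {f : α → β} (hf : Measurable f) (μ : Measure α) (b : β) :
    (μ.restrict (f ⁻¹' {b})).map f = μ (f ⁻¹' {b}) • Measure.dirac b := by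
  ext t ht
  rw [Measure.map_apply hf ht, Measure.restrict_apply (hf ht), Measure.smul_apply,
    Measure.dirac_apply' _ ht, smul_eq_mul]
  by_cases hb : b ∈ t
  · rw [Set.indicator_of_mem hb, ← Set.preimage_inter, Set.inter_eq_right.mpr
      (Set.singleton_subset_iff.mpr hb)]
    simp
  · rw [Set.indicator_of_notMem hb, ← Set.preimage_inter,
      Set.inter_singleton_eq_empty.mpr hb]
    simp

lemma myInvMulLeOne (x : ENNReal) : x⁻¹ * x ≤ 1 := by
  rcases eq_or_ne x 0 with h | h
  · simp [h]
  rcases eq_or_ne x ⊤ with h' | h'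
  · simp [h']
  · rw [ENNReal.inv_mul_cancel h h']

lemma myRestrictSumUniv {α ι : Type*} [MeasurableSpace α] (μ : Measure α) (s : Finset ι)
    (p : ι → Set α) (hp : ∀ i, MeasurableSet (p i))
    (hdisj : (↑s : Set ι).PairwiseDisjoint p) (hcov : ∀ x, ∃ i ∈ s, x ∈ p i) :
    ∑ i ∈ s, μ.restrict (p i) = μ := by
  ext t ht
  rw [Measure.finset_sum_apply]
  have : ∀ i ∈ s, μ.restrict (p i) t = μ (t ∩ p i) := fun i _ => Measure.restrict_apply ht
  rw [Finset.sum_congr rfl this, ← measure_biUnion_finset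
    (hdisj.mono_on fun i _ => Set.inter_subset_right) (fun i _ => ht.inter (hp i))]
  congr 1
  ext x
  simp only [Set.mem_iUnion, Set.mem_inter_iff]
  constructor
  · rintro ⟨i, _, hx, _⟩; exact hx
  · intro hx
    obtain ⟨i, hi, hxi⟩ := hcov x
    exact ⟨i, hi, hx, hxi⟩

lemma mySmulProd {α β : Type*} [MeasurableSpace α] [MeasurableSpace β]
    (c d : ENNReal) (hd : d ≠ ⊤) (μ : Measure α) (ν : Measure β) [SFinite μ] [SFinite ν] :
    (c • μ).prod (d • ν) = (c * d) • μ.prod ν := by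
  ext s hs
  rw [Measure.prod_apply hs, Measure.smul_apply, Measure.prod_apply hs,
    lintegral_smul_measure]
  simp only [Measure.smul_apply, smul_eq_mul]
  rw [lintegral_const_mul' _ _ hd, ← mul_assoc]
end helpers

/-- Pushforward of unbalanced couplings: for finite `X`, `Y`, discrete `A`, `C`, maps
`φ_a : X → A`, `φ_b : Y → C` and measures `μ` on `X`, `ν` on `Y` with `‖μ‖ ≤ ‖ν‖`,
the pushforward under `φ = φ_a × φ_b` of the set of unbalanced couplings `Γ(μ,ν)`
equals `Γ((φ_a)_*μ, (φ_b)_*ν)`. -/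
theorem pushforward_couplings {X Y A C : Type*} [Fintype X] [Fintype Y]
    [MeasurableSpace X] [MeasurableSpace Y] [MeasurableSpace A] [MeasurableSpace C]
    [MeasurableSingletonClass A] [MeasurableSingletonClass C]
    (φa : X → A) (φb : Y → C) (hφa : Measurable φa) (hφb : Measurable φb)
    (μ : Measure X) (ν : Measure Y) [IsFiniteMeasure μ] [IsFiniteMeasure ν]
    (hm : μ Set.univ ≤ ν Set.univ) :
    (fun γ : Measure (X × Y) => γ.map (Prod.map φa φb)) ''
        {γ : Measure (X × Y) | γ.map Prod.fst = μ ∧ γ.map Prod.snd ≤ ν} =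
      {γ : Measure (A × C) | γ.map Prod.fst = μ.map φa ∧ γ.map Prod.snd ≤ ν.map φb} := by
  classical
  ext γ'
  simp only [Set.mem_image, Set.mem_setOf_eq]
  constructor
  · rintro ⟨γ, ⟨g1, g2⟩, rfl⟩
    constructor
    · rw [Measure.map_map measurable_fst (hφa.prodMap hφb),
        show (Prod.fst ∘ Prod.map φa φb : X × Y → A) = φa ∘ Prod.fst from rfl,
        ← Measure.map_map hφa measurable_fst, g1]
    · rw [Measure.map_map measurable_snd (hφa.prodMap hφb),
        show (Prod.snd ∘ Prod.map φa φb : X × Y → C) = φb ∘ Prod.snd from rfl,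
        ← Measure.map_map hφb measurable_snd]
      exact Measure.map_mono g2 hφb
  · rintro ⟨h1, h2⟩
    set pa : A → Set X := fun a => φa ⁻¹' {a} with hpa
    set pb : C → Set Y := fun c => φb ⁻¹' {c} with hpb
    have hma : ∀ a, MeasurableSet (pa a) := fun a => hφa (measurableSet_singleton a)
    have hmb : ∀ c, MeasurableSet (pb c) := fun c => hφb (measurableSet_singleton c)
    set FA : Finset A := Finset.univ.image φa with hFA
    set FC : Finset C := Finset.univ.image φb with hFC
    have hmemA : ∀ x, φa x ∈ FA := fun x => Finset.mem_image_of_mem φa (Finset.mem_univ x)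
    have hmemC : ∀ y, φb y ∈ FC := fun y => Finset.mem_image_of_mem φb (Finset.mem_univ y)
    -- marginal evaluations
    have hfst : ∀ S : Set A, MeasurableSet S → γ' (Prod.fst ⁻¹' S) = μ (φa ⁻¹' S) := by
      intro S hS
      rw [← Measure.map_apply measurable_fst hS, h1, Measure.map_apply hφa hS]
    have hsnd : ∀ S : Set C, MeasurableSet S → γ' (Prod.snd ⁻¹' S) ≤ ν (φb ⁻¹' S) := by
      intro S hS
      rw [← Measure.map_apply measurable_snd hS, ← Measure.map_apply hφb hS]
      exact Measure.le_iff.mp h2 S hS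
    have hrow : ∀ a, γ' ({a} ×ˢ (Set.univ : Set C)) = μ (pa a) := by
      intro a
      rw [Set.prod_univ]
      exact hfst {a} (measurableSet_singleton a)
    have hcolle : ∀ c, γ' ((Set.univ : Set A) ×ˢ {c}) ≤ ν (pb c) := by
      intro c
      rw [Set.univ_prod]
      exact hsnd {c} (measurableSet_singleton c)
    have hz : ∀ a c, μ (pa a) = 0 → γ' {(a, c)} = 0 := by
      intro a c h
      refine measure_mono_null ?_ ((hrow a).trans h)
      simp
    have hz' : ∀ a c, ν (pb c) = 0 → γ' {(a, c)} = 0 := by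
      intro a c h
      refine measure_mono_null (Set.singleton_subset_iff.mpr ?_)
        (le_antisymm ((hcolle c).trans h.le) zero_le)
      simp
    -- null complements
    have hpreA : φa ⁻¹' ((↑FA : Set A)ᶜ) = ∅ := by
      ext x; simp [hmemA x]
    have hpreC : φb ⁻¹' ((↑FC : Set C)ᶜ) = ∅ := by
      ext y; simp [hmemC y]
    have hnullA : γ' (Prod.fst ⁻¹' ((↑FA : Set A)ᶜ)) = 0 := by
      rw [hfst _ (FA.finite_toSet.measurableSet.compl), hpreA, measure_empty]
    have hnullC : γ' (Prod.snd ⁻¹' ((↑FC : Set C)ᶜ)) = 0 := by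
      refine le_antisymm (le_trans (hsnd _ (FC.finite_toSet.measurableSet.compl)) ?_) zero_le
      rw [hpreC, measure_empty]
    -- row sums
    have hsingsub : ∀ (a : A) (s : Finset C),
        ∑ c' ∈ s, γ' {(a, c')} = γ' ({a} ×ˢ (↑s : Set C)) := by
      intro a s
      rw [show ({a} ×ˢ (↑s : Set C)) = ⋃ c' ∈ s, ({(a, c')} : Set (A × C)) by
        ext p
        simp only [Set.mem_prod, Set.mem_singleton_iff, Set.mem_iUnion, Finset.mem_coe]
        constructor
        · rintro ⟨h1', h2'⟩; exact ⟨p.2, h2', by rw [← h1']⟩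
        · rintro ⟨c', hc', rfl⟩; exact ⟨rfl, hc'⟩,
        measure_biUnion_finset ?_ (fun c' _ => measurableSet_singleton _)]
      intro c1 _ c2 _ hne
      simp only [Function.onFun, Set.disjoint_singleton_left, Set.mem_singleton_iff,
        Prod.mk.injEq]
      exact fun ⟨_, h⟩ => hne h
    have hsingsub' : ∀ (c : C) (s : Finset A),
        ∑ a' ∈ s, γ' {(a', c)} = γ' ((↑s : Set A) ×ˢ {c}) := by
      intro c s
      rw [show ((↑s : Set A) ×ˢ ({c} : Set C)) = ⋃ a' ∈ s, ({(a', c)} : Set (A × C)) by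
        ext p
        simp only [Set.mem_prod, Set.mem_singleton_iff, Set.mem_iUnion, Finset.mem_coe]
        constructor
        · rintro ⟨h1', h2'⟩; exact ⟨p.1, h1', by rw [← h2']⟩
        · rintro ⟨a', ha', rfl⟩; exact ⟨ha', rfl⟩,
        measure_biUnion_finset ?_ (fun a' _ => measurableSet_singleton _)]
      intro a1 _ a2 _ hne
      simp only [Function.onFun, Set.disjoint_singleton_left, Set.mem_singleton_iff,
        Prod.mk.injEq]
      exact fun ⟨h, _⟩ => hne h
    have hrowFC : ∀ a, ∑ c ∈ FC, γ' {(a, c)} = μ (pa a) := by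
      intro a
      rw [hsingsub a FC, ← hrow a]
      refine le_antisymm (measure_mono (Set.prod_mono_right (Set.subset_univ _))) ?_
      calc γ' ({a} ×ˢ (Set.univ : Set C))
          ≤ γ' ({a} ×ˢ (↑FC : Set C) ∪ Prod.snd ⁻¹' ((↑FC : Set C)ᶜ)) := by
            refine measure_mono ?_
            rintro ⟨p1, p2⟩ ⟨hp1, -⟩
            by_cases h : p2 ∈ FC
            · exact Or.inl ⟨hp1, h⟩
            · exact Or.inr h
        _ ≤ γ' ({a} ×ˢ (↑FC : Set C)) + γ' (Prod.snd ⁻¹' ((↑FC : Set C)ᶜ)) :=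
            measure_union_le _ _
        _ = γ' ({a} ×ˢ (↑FC : Set C)) := by rw [hnullC, add_zero]
    have hcolFA : ∀ c, ∑ a ∈ FA, γ' {(a, c)} ≤ ν (pb c) := by
      intro c
      rw [hsingsub' c FA]
      exact le_trans (measure_mono (Set.prod_mono_left (Set.subset_univ _))) (hcolle c)
    -- the construction
    set w : A → C → ENNReal := fun a c => γ' {(a, c)} * (μ (pa a))⁻¹ * (ν (pb c))⁻¹ with hw
    have hdja : ((↑FA : Set A)).PairwiseDisjoint pa := by
      intro a1 _ a2 _ hne
      exact Disjoint.preimage φa (Set.disjoint_singleton.mpr hne)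
    have hdjb : ((↑FC : Set C)).PairwiseDisjoint pb := by
      intro c1 _ c2 _ hne
      exact Disjoint.preimage φb (Set.disjoint_singleton.mpr hne)
    have hcova : ∀ x, ∃ a ∈ FA, x ∈ pa a := fun x => ⟨φa x, hmemA x, rfl⟩
    have hcovb : ∀ y, ∃ c ∈ FC, y ∈ pb c := fun y => ⟨φb y, hmemC y, rfl⟩
    refine ⟨∑ a ∈ FA, ∑ c ∈ FC, w a c • ((μ.restrict (pa a)).prod (ν.restrict (pb c))),
      ⟨?_, ?_⟩, ?_⟩
    · -- first marginal
      rw [myMapSum measurable_fst]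
      have step : ∀ a ∈ FA,
          (∑ c ∈ FC, w a c • ((μ.restrict (pa a)).prod (ν.restrict (pb c)))).map Prod.fst
            = μ.restrict (pa a) := by
        intro a _
        rw [myMapSum measurable_fst]
        have e1 : ∀ c ∈ FC,
            (w a c • ((μ.restrict (pa a)).prod (ν.restrict (pb c)))).map Prod.fst
              = (w a c * ν (pb c)) • μ.restrict (pa a) := by
          intro c _
          rw [Measure.map_smul, Measure.map_fst_prod, Measure.restrict_apply_univ, smul_smul]
        rw [Finset.sum_congr rfl e1, ← Finset.sum_smul]
        have hsum : ∑ c ∈ FC, w a c * ν (pb c) = μ (pa a) * (μ (pa a))⁻¹ := by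
          have e2 : ∀ c ∈ FC, w a c * ν (pb c) = γ' {(a, c)} * (μ (pa a))⁻¹ := by
            intro c _
            rcases eq_or_ne (ν (pb c)) 0 with h | h
            · simp [hw, hz' a c h, h]
            · simp only [hw]
              rw [mul_assoc (γ' {(a, c)} * (μ (pa a))⁻¹),
                ENNReal.inv_mul_cancel h (measure_ne_top _ _), mul_one]
          rw [Finset.sum_congr rfl e2, ← Finset.sum_mul, hrowFC a]
        rw [hsum]
        rcases eq_or_ne (μ (pa a)) 0 with h | h
        · rw [Measure.restrict_eq_zero.mpr h, smul_zero]
        · rw [ENNReal.mul_inv_cancel h (measure_ne_top _ _), one_smul]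
      rw [Finset.sum_congr rfl step]
      exact myRestrictSumUniv μ FA pa hma hdja hcova
    · -- second marginal
      rw [Measure.le_iff]
      intro s hs
      have hre : ∑ c ∈ FC, ν (s ∩ pb c) = ν s := by
        have e0 : ∀ c ∈ FC, ν (s ∩ pb c) = ν.restrict (pb c) s :=
          fun c _ => (Measure.restrict_apply hs).symm
        rw [Finset.sum_congr rfl e0, ← Measure.finset_sum_apply,
          myRestrictSumUniv ν FC pb hmb hdjb hcovb]
      calc ((∑ a ∈ FA, ∑ c ∈ FC,
              w a c • ((μ.restrict (pa a)).prod (ν.restrict (pb c)))).map Prod.snd) s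
          = ∑ a ∈ FA, ∑ c ∈ FC, w a c * μ (pa a) * ν (s ∩ pb c) := by
            rw [myMapSum measurable_snd, Measure.finset_sum_apply]
            refine Finset.sum_congr rfl fun a _ => ?_
            rw [myMapSum measurable_snd, Measure.finset_sum_apply]
            refine Finset.sum_congr rfl fun c _ => ?_
            rw [Measure.map_smul, Measure.map_snd_prod, Measure.restrict_apply_univ,
              smul_smul, Measure.smul_apply, Measure.restrict_apply hs, smul_eq_mul]
        _ = ∑ c ∈ FC, ∑ a ∈ FA, w a c * μ (pa a) * ν (s ∩ pb c) := Finset.sum_comm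
        _ ≤ ∑ c ∈ FC, ν (s ∩ pb c) := by
            refine Finset.sum_le_sum fun c _ => ?_
            rw [← Finset.sum_mul]
            have hk : (∑ a ∈ FA, w a c * μ (pa a)) ≤ 1 := by
              calc ∑ a ∈ FA, w a c * μ (pa a)
                  ≤ ∑ a ∈ FA, γ' {(a, c)} * (ν (pb c))⁻¹ := by
                    refine Finset.sum_le_sum fun a _ => ?_
                    simp only [hw]
                    calc γ' {(a, c)} * (μ (pa a))⁻¹ * (ν (pb c))⁻¹ * μ (pa a)
                        = γ' {(a, c)} * (ν (pb c))⁻¹ * ((μ (pa a))⁻¹ * μ (pa a)) := by ring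
                      _ ≤ γ' {(a, c)} * (ν (pb c))⁻¹ * 1 :=
                          mul_le_mul_right (myInvMulLeOne _) _
                      _ = γ' {(a, c)} * (ν (pb c))⁻¹ := mul_one _
                _ = (∑ a ∈ FA, γ' {(a, c)}) * (ν (pb c))⁻¹ := (Finset.sum_mul _ _ _).symm
                _ ≤ ν (pb c) * (ν (pb c))⁻¹ := mul_le_mul_left (hcolFA c) _
                _ ≤ 1 := by rw [mul_comm]; exact myInvMulLeOne _
            calc (∑ a ∈ FA, w a c * μ (pa a)) * ν (s ∩ pb c)
                ≤ 1 * ν (s ∩ pb c) := mul_le_mul_left hk _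
              _ = ν (s ∩ pb c) := one_mul _
        _ = ν s := hre
    · -- pushforward equals γ'
      rw [myMapSum (hφa.prodMap hφb)]
      have step : ∀ a ∈ FA,
          (∑ c ∈ FC, w a c • ((μ.restrict (pa a)).prod (ν.restrict (pb c)))).map
              (Prod.map φa φb)
            = ∑ c ∈ FC, γ' {(a, c)} • Measure.dirac (a, c) := by
        intro a _
        rw [myMapSum (hφa.prodMap hφb)]
        refine Finset.sum_congr rfl fun c _ => ?_
        rw [Measure.map_smul, ← Measure.map_prod_map _ _ hφa hφb, myMapRestrict hφa,
          myMapRestrict hφb, mySmulProd _ _ (measure_ne_top _ _) _ _,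
          Measure.dirac_prod_dirac, smul_smul]
        congr 1
        rcases eq_or_ne (μ (pa a)) 0 with h | h
        · simp [hw, hz a c h, h]
        rcases eq_or_ne (ν (pb c)) 0 with h' | h'
        · simp [hw, hz' a c h', h']
        · simp only [hw]
          calc γ' {(a, c)} * (μ (pa a))⁻¹ * (ν (pb c))⁻¹ * (μ (pa a) * ν (pb c))
              = γ' {(a, c)} * ((μ (pa a))⁻¹ * μ (pa a)) * ((ν (pb c))⁻¹ * ν (pb c)) := by
                ring
            _ = γ' {(a, c)} := by
                rw [ENNReal.inv_mul_cancel h (measure_ne_top _ _),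
                  ENNReal.inv_mul_cancel h' (measure_ne_top _ _), mul_one, mul_one]
      rw [Finset.sum_congr rfl step]
      ext s hs
      have term : ∀ p : A × C, (γ' {p} • Measure.dirac p) s = γ' (s ∩ {p}) := by
        intro p
        rw [Measure.smul_apply, Measure.dirac_apply' _ hs, smul_eq_mul]
        by_cases hp : p ∈ s
        · rw [Set.indicator_of_mem hp, Set.inter_eq_right.mpr
            (Set.singleton_subset_iff.mpr hp)]
          simp
        · rw [Set.indicator_of_notMem hp, Set.inter_singleton_eq_empty.mpr hp]
          simp
      have lhs : (∑ a ∈ FA, ∑ c ∈ FC, γ' {(a, c)} • Measure.dirac (a, c)) s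
          = ∑ p ∈ FA ×ˢ FC, γ' (s ∩ {p}) := by
        rw [Measure.finset_sum_apply]
        have e3 : ∀ a ∈ FA, (∑ c ∈ FC, γ' {(a, c)} • Measure.dirac (a, c)) s
            = ∑ c ∈ FC, γ' (s ∩ {(a, c)}) := by
          intro a _
          rw [Measure.finset_sum_apply]
          exact Finset.sum_congr rfl fun c _ => term (a, c)
        rw [Finset.sum_congr rfl e3, ← Finset.sum_product']
      rw [lhs]
      have hdsj : ((↑(FA ×ˢ FC)) : Set (A × C)).PairwiseDisjoint
          (fun p => s ∩ ({p} : Set (A × C))) := by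
        intro p1 _ p2 _ hne
        exact Disjoint.mono Set.inter_subset_right Set.inter_subset_right
          (Set.disjoint_singleton.mpr hne)
      have un : ∑ p ∈ FA ×ˢ FC, γ' (s ∩ {p})
          = γ' (s ∩ ((↑FA : Set A) ×ˢ (↑FC : Set C))) := by
        rw [← measure_biUnion_finset hdsj
          (fun p _ => hs.inter (measurableSet_singleton _))]
        congr 1
        ext q
        simp only [Set.mem_iUnion, Set.mem_inter_iff, Set.mem_singleton_iff,
          Finset.mem_product, Set.mem_prod, Finset.mem_coe]
        constructor
        · rintro ⟨p, hp, hqs, rfl⟩; exact ⟨hqs, hp⟩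
        · rintro ⟨hqs, hq⟩; exact ⟨q, hq, hqs, rfl⟩
      rw [un]
      have h0 : γ' (s \ ((↑FA : Set A) ×ˢ (↑FC : Set C))) = 0 := by
        refine measure_mono_null ?_ (measure_union_null hnullA hnullC)
        rintro ⟨qa, qc⟩ ⟨-, hqF⟩
        simp only [Set.mem_prod, Finset.mem_coe, not_and_or] at hqF
        rcases hqF with h | h
        · exact Or.inl h
        · exact Or.inr h
      refine le_antisymm (measure_mono Set.inter_subset_left) ?_
      calc γ' s ≤ γ' (s ∩ ((↑FA : Set A) ×ˢ (↑FC : Set C)))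
            + γ' (s \ ((↑FA : Set A) ×ˢ (↑FC : Set C))) := measure_le_inter_add_diff _ _ _
        _ = γ' (s ∩ ((↑FA : Set A) ×ˢ (↑FC : Set C))) := by rw [h0, add_zero]
end

section
/- Let X, Y be finite metric spaces, (Z, d_Z) a complete separable metric space, φ_X: X → Z and φ_Y: Y → Z measurable, and μ_X ∈ M_{≤1}(X), μ_Y ∈ M_{≤1}(Y). Then OT_{d_Z}((φ_X)_*μ_X, (φ_Y)_*μ_Y) = inf over couplings γ ∈ Γ(μ_X, μ_Y) of ∫_{X×Y} d_Z(φ_X(x), φ_Y(y)) dγ(x,y) (plus the mass-difference term |‖μ_X‖ − ‖μ_Y‖|). -/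
open MeasureTheory
open scoped ENNReal

/-- Unbalanced optimal transport distance (extended-real valued). -/
noncomputable def UOTe {α : Type*} [MeasurableSpace α] (d : α → α → ℝ) (μ ν : Measure α) :
    ℝ≥0∞ :=
  (if μ Set.univ ≤ ν Set.univ then
      ⨅ γ ∈ {γ : Measure (α × α) | γ.map Prod.fst = μ ∧ γ.map Prod.snd ≤ ν},
        ∫⁻ q, ENNReal.ofReal (d q.1 q.2) ∂γ
    else
      ⨅ γ ∈ {γ : Measure (α × α) | γ.map Prod.fst = ν ∧ γ.map Prod.snd ≤ μ},
        ∫⁻ q, ENNReal.ofReal (d q.1 q.2) ∂γ)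
  + ((μ Set.univ - ν Set.univ) + (ν Set.univ - μ Set.univ))

private lemma uot_div_helper1 (c a b m : ℝ≥0∞) (ha : a ≠ 0) (hb : b ≠ ∞) (hcb : c ≤ b) :
    c / (a * b) * (m * b) = c / a * m := by
  rcases eq_or_ne b 0 with rfl | hb0
  · have hc : c = 0 := le_antisymm hcb zero_le
    simp [hc]
  · rw [div_eq_mul_inv, div_eq_mul_inv, ENNReal.mul_inv (Or.inl ha) (Or.inr hb0)]
    calc c * (a⁻¹ * b⁻¹) * (m * b) = c * a⁻¹ * m * (b⁻¹ * b) := by ring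
    _ = c * a⁻¹ * m := by rw [ENNReal.inv_mul_cancel hb0 hb, mul_one]

private lemma uot_div_helper2 (c a b m : ℝ≥0∞) (ha : a ≠ ∞) (hca : c ≤ a) :
    c / (a * b) * (a * m) = c / b * m := by
  rcases eq_or_ne a 0 with rfl | ha0
  · have hc : c = 0 := le_antisymm hca zero_le
    simp [hc]
  · rw [div_eq_mul_inv, div_eq_mul_inv, ENNReal.mul_inv (Or.inl ha0) (Or.inl ha)]
    calc c * (a⁻¹ * b⁻¹) * (a * m) = c * b⁻¹ * m * (a⁻¹ * a) := by ring
    _ = c * b⁻¹ * m := by rw [ENNReal.inv_mul_cancel ha0 ha, mul_one]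

private lemma uot_div_mul_le (c u : ℝ≥0∞) : c / u * u ≤ c := by
  rcases eq_or_ne u 0 with rfl | h0
  · simp
  rcases eq_or_ne u ∞ with rfl | ht
  · simp [ENNReal.div_top]
  · rw [ENNReal.div_mul_cancel h0 ht]

/-- Sum of measures of fibers is the total measure. -/
private lemma uot_sum_fiber {X Z : Type*} [MeasurableSpace X] [MeasurableSpace Z]
    [MeasurableSingletonClass Z] (φ : X → Z) (hφ : Measurable φ) (S : Finset Z)
    (hS : ∀ x, φ x ∈ S) (μ : Measure X) (s : Set X) (hs : MeasurableSet s) :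
    ∑ z ∈ S, μ (s ∩ φ ⁻¹' {z}) = μ s := by
  rw [← measure_biUnion_finset]
  · congr 1
    ext x
    simp only [Set.mem_iUnion, Set.mem_inter_iff, Set.mem_preimage, Set.mem_singleton_iff]
    constructor
    · rintro ⟨z, _, hx, _⟩; exact hx
    · intro hx; exact ⟨φ x, hS x, hx, rfl⟩
  · intro z _ w _ hzw
    refine Set.disjoint_left.2 fun x hx hx' => hzw ?_
    simp only [Set.mem_inter_iff, Set.mem_preimage, Set.mem_singleton_iff] at hx hx'
    rw [← hx.2, ← hx'.2]
  · exact fun z _ => hs.inter (hφ (measurableSet_singleton z))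

/-- The gluing construction: a coupling of the pushforwards lifts to a coupling
of the original measures without increasing the transport cost. -/
private lemma uot_lift_coupling {X Y Z : Type*} [Fintype X] [Fintype Y]
    [MeasurableSpace X] [MeasurableSpace Y] [MeasurableSpace Z] [MeasurableSingletonClass Z]
    (φX : X → Z) (φY : Y → Z) (hφX : Measurable φX) (hφY : Measurable φY)
    (μX : Measure X) (μY : Measure Y) [IsFiniteMeasure μX] [IsFiniteMeasure μY]
    (g : Z → Z → ℝ≥0∞)
    (γ : Measure (Z × Z)) (h1 : γ.map Prod.fst = μX.map φX) (h2 : γ.map Prod.snd ≤ μY.map φY) :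
    ∃ γ' : Measure (X × Y), γ'.map Prod.fst = μX ∧ γ'.map Prod.snd ≤ μY ∧
      ∫⁻ p, g (φX p.1) (φY p.2) ∂γ' ≤ ∫⁻ q, g q.1 q.2 ∂γ := by
  classical
  set S : Finset Z := Finset.univ.image φX with hSdef
  set T : Finset Z := Finset.univ.image φY with hTdef
  have hSx : ∀ x, φX x ∈ S := fun x => Finset.mem_image_of_mem _ (Finset.mem_univ x)
  have hTy : ∀ y, φY y ∈ T := fun y => Finset.mem_image_of_mem _ (Finset.mem_univ y)
  set A : Z → Set X := fun z => φX ⁻¹' {z} with hAdef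
  set B : Z → Set Y := fun w => φY ⁻¹' {w} with hBdef
  have hAm : ∀ z, MeasurableSet (A z) := fun z => hφX (measurableSet_singleton z)
  have hBm : ∀ w, MeasurableSet (B w) := fun w => hφY (measurableSet_singleton w)
  set a : Z → ℝ≥0∞ := fun z => μX (A z) with hadef
  set b : Z → ℝ≥0∞ := fun w => μY (B w) with hbdef
  set c : Z → Z → ℝ≥0∞ := fun z w => γ ({z} ×ˢ {w}) with hcdef
  have ha_ne : ∀ z, a z ≠ ∞ := fun z => measure_ne_top _ _
  have hb_ne : ∀ w, b w ≠ ∞ := fun w => measure_ne_top _ _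
  -- marginal facts for γ
  have hγf : ∀ z : Z, γ (Prod.fst ⁻¹' {z}) = a z := by
    intro z
    rw [← Measure.map_apply measurable_fst (measurableSet_singleton z), h1,
      Measure.map_apply hφX (measurableSet_singleton z)]
  have hγs : ∀ w : Z, γ (Prod.snd ⁻¹' {w}) ≤ b w := by
    intro w
    rw [← Measure.map_apply measurable_snd (measurableSet_singleton w)]
    calc γ.map Prod.snd {w} ≤ (μY.map φY) {w} := Measure.le_iff'.1 h2 _
    _ = b w := Measure.map_apply hφY (measurableSet_singleton w)
  have hca : ∀ z w, c z w ≤ a z := fun z w => by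
    rw [← hγf z]; exact measure_mono fun p hp => hp.1
  have hcb : ∀ z w, c z w ≤ b w := fun z w =>
    le_trans (measure_mono fun p hp => hp.2) (hγs w)
  -- row sums
  have hdisjT : ∀ z : Z, ∑ w ∈ T, c z w = γ ({z} ×ˢ (↑T : Set Z)) := by
    intro z
    rw [← measure_biUnion_finset]
    · congr 1
      ext p
      simp only [Set.mem_iUnion, Set.mem_prod, Set.mem_singleton_iff, Finset.mem_coe]
      constructor
      · rintro ⟨w, hw, h1', h2'⟩; exact ⟨h1', h2' ▸ hw⟩
      · rintro ⟨h1', h2'⟩; exact ⟨p.2, h2', h1', rfl⟩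
    · intro w _ w' _ hww'
      refine Set.disjoint_left.2 fun p hp hp' => hww' ?_
      simp only [Set.mem_prod, Set.mem_singleton_iff] at hp hp'
      rw [← hp.2, ← hp'.2]
    · exact fun w _ => (measurableSet_singleton z).prod (measurableSet_singleton w)
  have hTnull : γ (Prod.snd ⁻¹' ((↑T : Set Z)ᶜ)) = 0 := by
    refine le_antisymm ?_ zero_le
    calc γ (Prod.snd ⁻¹' ((↑T : Set Z)ᶜ))
        = γ.map Prod.snd ((↑T : Set Z)ᶜ) :=
          (Measure.map_apply measurable_snd T.measurableSet.compl).symm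
    _ ≤ (μY.map φY) ((↑T : Set Z)ᶜ) := Measure.le_iff'.1 h2 _
    _ = μY (φY ⁻¹' ((↑T : Set Z)ᶜ)) := Measure.map_apply hφY T.measurableSet.compl
    _ = 0 := by
          have hemp : φY ⁻¹' ((↑T : Set Z)ᶜ) = ∅ := by
            ext y; simp [hTy y]
          rw [hemp, measure_empty]
  have hrow : ∀ z : Z, ∑ w ∈ T, c z w = a z := by
    intro z
    rw [hdisjT z, ← hγf z]
    refine le_antisymm (measure_mono fun p hp => hp.1) ?_
    have hsub : Prod.fst ⁻¹' ({z} : Set Z) ⊆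
        ({z} ×ˢ (↑T : Set Z)) ∪ Prod.snd ⁻¹' ((↑T : Set Z)ᶜ) := by
      intro p hp
      by_cases hpT : p.2 ∈ (↑T : Set Z)
      · exact Or.inl ⟨hp, hpT⟩
      · exact Or.inr hpT
    calc γ (Prod.fst ⁻¹' ({z} : Set Z))
        ≤ γ (({z} ×ˢ (↑T : Set Z)) ∪ Prod.snd ⁻¹' ((↑T : Set Z)ᶜ)) := measure_mono hsub
    _ ≤ γ ({z} ×ˢ (↑T : Set Z)) + γ (Prod.snd ⁻¹' ((↑T : Set Z)ᶜ)) := measure_union_le _ _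
    _ = γ ({z} ×ˢ (↑T : Set Z)) := by rw [hTnull, add_zero]
  -- column sums
  have hcol : ∀ w : Z, ∑ z ∈ S, c z w ≤ b w := by
    intro w
    have : ∑ z ∈ S, c z w = γ ((↑S : Set Z) ×ˢ {w}) := by
      rw [← measure_biUnion_finset]
      · congr 1
        ext p
        simp only [Set.mem_iUnion, Set.mem_prod, Set.mem_singleton_iff, Finset.mem_coe]
        constructor
        · rintro ⟨z, hz, h1', h2'⟩; exact ⟨h1' ▸ hz, h2'⟩
        · rintro ⟨h1', h2'⟩; exact ⟨p.1, h1', rfl, h2'⟩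
      · intro z _ z' _ hzz'
        refine Set.disjoint_left.2 fun p hp hp' => hzz' ?_
        simp only [Set.mem_prod, Set.mem_singleton_iff] at hp hp'
        rw [← hp.1, ← hp'.1]
      · exact fun z _ => (measurableSet_singleton z).prod (measurableSet_singleton w)
    rw [this]
    exact le_trans (measure_mono fun p hp => hp.2) (hγs w)
  -- the lifted coupling
  set γ' : Measure (X × Y) :=
    ∑ z ∈ S, ∑ w ∈ T, (c z w / (a z * b w)) • ((μX.restrict (A z)).prod (μY.restrict (B w)))
    with hγ'def
  have hγ'apply : ∀ u : Set X × Y → Prop, True := fun _ => trivial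
  refine ⟨γ', ?_, ?_, ?_⟩
  · -- first marginal
    ext s hs
    rw [Measure.map_apply measurable_fst hs, hγ'def]
    have hfst : Prod.fst ⁻¹' s = s ×ˢ (Set.univ : Set Y) := (Set.prod_univ).symm
    rw [hfst]
    simp only [Measure.finset_sum_apply, Measure.smul_apply, smul_eq_mul,
      Measure.prod_prod, Measure.restrict_apply hs, Measure.restrict_apply_univ]
    have hinner : ∀ z : Z, ∑ w ∈ T, c z w / (a z * b w) * (μX (s ∩ A z) * b w)
        = μX (s ∩ A z) := by
      intro z
      have hsa : μX (s ∩ A z) ≤ a z := measure_mono Set.inter_subset_right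
      by_cases hz : a z = 0
      · have hm0 : μX (s ∩ A z) = 0 := le_antisymm (hz ▸ hsa) zero_le
        rw [hm0]
        refine Finset.sum_eq_zero fun w _ => ?_
        simp
      · have : ∀ w ∈ T, c z w / (a z * b w) * (μX (s ∩ A z) * b w)
            = c z w * ((a z)⁻¹ * μX (s ∩ A z)) := by
          intro w _
          rw [uot_div_helper1 (c z w) (a z) (b w) (μX (s ∩ A z)) hz (hb_ne w) (hcb z w),
            div_eq_mul_inv, mul_assoc]
        rw [Finset.sum_congr rfl this, ← Finset.sum_mul, hrow z, ← mul_assoc,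
          ENNReal.mul_inv_cancel hz (ha_ne z), one_mul]
    rw [Finset.sum_congr rfl fun z _ => hinner z]
    exact uot_sum_fiber φX hφX S hSx μX s hs
  · -- second marginal
    rw [Measure.le_iff]
    intro s hs
    rw [Measure.map_apply measurable_snd hs, hγ'def]
    have hsnd : Prod.snd ⁻¹' s = (Set.univ : Set X) ×ˢ s := (Set.univ_prod).symm
    rw [hsnd]
    simp only [Measure.finset_sum_apply, Measure.smul_apply, smul_eq_mul,
      Measure.prod_prod, Measure.restrict_apply hs, Measure.restrict_apply_univ]
    rw [Finset.sum_comm]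
    have hinner : ∀ w : Z, ∑ z ∈ S, c z w / (a z * b w) * (μX (A z) * μY (s ∩ B w))
        ≤ μY (s ∩ B w) := by
      intro w
      have : ∀ z ∈ S, c z w / (a z * b w) * (μX (A z) * μY (s ∩ B w))
          = c z w * ((b w)⁻¹ * μY (s ∩ B w)) := by
        intro z _
        rw [uot_div_helper2 (c z w) (a z) (b w) (μY (s ∩ B w)) (ha_ne z) (hca z w),
          div_eq_mul_inv, mul_assoc]
      rw [Finset.sum_congr rfl this, ← Finset.sum_mul, ← mul_assoc]
      calc (∑ z ∈ S, c z w) * (b w)⁻¹ * μY (s ∩ B w)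
          ≤ b w * (b w)⁻¹ * μY (s ∩ B w) := by
            gcongr
            exact hcol w
      _ ≤ 1 * μY (s ∩ B w) := by
            gcongr
            exact ENNReal.mul_inv_le_one (b w)
      _ = μY (s ∩ B w) := one_mul _
    calc ∑ w ∈ T, ∑ z ∈ S, c z w / (a z * b w) * (μX (A z) * μY (s ∩ B w))
        ≤ ∑ w ∈ T, μY (s ∩ B w) := Finset.sum_le_sum fun w _ => hinner w
    _ = μY s := uot_sum_fiber φY hφY T hTy μY s hs
  · -- transport cost
    rw [hγ'def, lintegral_finset_sum_measure]
    have hterm : ∀ z ∈ S, ∀ w ∈ T,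
        ∫⁻ p, g (φX p.1) (φY p.2)
          ∂((c z w / (a z * b w)) • ((μX.restrict (A z)).prod (μY.restrict (B w))))
        ≤ g z w * c z w := by
      intro z _ w _
      rw [lintegral_smul_measure]
      have hnull : ((μX.restrict (A z)).prod (μY.restrict (B w))) ((A z ×ˢ B w)ᶜ) = 0 := by
        rw [Set.compl_prod_eq_union]
        refine le_antisymm (le_trans (measure_union_le _ _) ?_) zero_le
        rw [Measure.prod_prod, Measure.prod_prod, Measure.restrict_apply (hAm z).compl,
          Measure.restrict_apply (hBm w).compl]
        simp
      have hae : (fun p : X × Y => g (φX p.1) (φY p.2))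
          =ᵐ[(μX.restrict (A z)).prod (μY.restrict (B w))] fun _ => g z w := by
        refine measure_mono_null (fun p hp => ?_) hnull
        simp only [Set.mem_setOf_eq] at hp
        intro hpc
        apply hp
        show g (φX p.1) (φY p.2) = g z w
        rw [show φX p.1 = z from hpc.1, show φY p.2 = w from hpc.2]
      rw [lintegral_congr_ae hae, lintegral_const]
      have huniv : ((μX.restrict (A z)).prod (μY.restrict (B w))) Set.univ = a z * b w := by
        rw [← Set.univ_prod_univ, Measure.prod_prod, Measure.restrict_apply_univ,
          Measure.restrict_apply_univ]
      rw [huniv]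
      calc c z w / (a z * b w) * (g z w * (a z * b w))
          = g z w * (c z w / (a z * b w) * (a z * b w)) := by ring
      _ ≤ g z w * c z w := mul_le_mul_right (uot_div_mul_le _ _) _
    have hsum : ∑ z ∈ S, ∫⁻ p, g (φX p.1) (φY p.2)
          ∂(∑ w ∈ T, (c z w / (a z * b w)) • ((μX.restrict (A z)).prod (μY.restrict (B w))))
        ≤ ∑ z ∈ S, ∑ w ∈ T, g z w * c z w := by
      refine Finset.sum_le_sum fun z hz => ?_
      rw [lintegral_finset_sum_measure]
      exact Finset.sum_le_sum fun w hw => hterm z hz w hw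
    refine le_trans hsum ?_
    have hkey : ∑ z ∈ S, ∑ w ∈ T, g z w * c z w
        = ∫⁻ q in (↑(S ×ˢ T) : Set (Z × Z)), g q.1 q.2 ∂γ := by
      rw [lintegral_finset (S ×ˢ T) (fun q => g q.1 q.2), Finset.sum_product]
      refine Finset.sum_congr rfl fun z _ => Finset.sum_congr rfl fun w _ => ?_
      congr 1
      rw [hcdef]
      simp [Set.singleton_prod_singleton]
    rw [hkey]
    exact setLIntegral_le_lintegral _ _

/-- Optimal transport between pushforwards: for finite metric spaces `X`, `Y`, a complete
separable metric space `Z`, measurable `φ_X : X → Z`, `φ_Y : Y → Z` and sub-probability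
measures `μ_X`, `μ_Y` with `‖μ_X‖ ≤ ‖μ_Y‖`, the unbalanced OT distance between the
pushforwards equals the infimum over couplings `γ ∈ Γ(μ_X, μ_Y)` of
`∫ d_Z(φ_X x, φ_Y y) dγ` plus the mass-difference term. -/
theorem uot_map_eq_inf_couplings {X Y Z : Type*}
    [MetricSpace X] [Fintype X] [MetricSpace Y] [Fintype Y]
    [MetricSpace Z] [CompleteSpace Z] [TopologicalSpace.SeparableSpace Z]
    [MeasurableSpace X] [MeasurableSpace Y] [MeasurableSpace Z] [BorelSpace Z]
    (φX : X → Z) (φY : Y → Z) (hφX : Measurable φX) (hφY : Measurable φY)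
    (μX : Measure X) (μY : Measure Y)
    (hμX : μX Set.univ ≤ 1) (hμY : μY Set.univ ≤ 1)
    (hm : μX Set.univ ≤ μY Set.univ) :
    UOTe dist (μX.map φX) (μY.map φY) =
      (⨅ γ ∈ {γ : Measure (X × Y) | γ.map Prod.fst = μX ∧ γ.map Prod.snd ≤ μY},
        ∫⁻ q, ENNReal.ofReal (dist (φX q.1) (φY q.2)) ∂γ)
      + ((μX Set.univ - μY Set.univ) + (μY Set.univ - μX Set.univ)) := by
  classical
  haveI : IsFiniteMeasure μX := ⟨lt_of_le_of_lt hμX ENNReal.one_lt_top⟩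
  haveI : IsFiniteMeasure μY := ⟨lt_of_le_of_lt hμY ENNReal.one_lt_top⟩
  have hXuniv : (μX.map φX) Set.univ = μX Set.univ := by
    rw [Measure.map_apply hφX MeasurableSet.univ, Set.preimage_univ]
  have hYuniv : (μY.map φY) Set.univ = μY Set.univ := by
    rw [Measure.map_apply hφY MeasurableSet.univ, Set.preimage_univ]
  rw [UOTe, hXuniv, hYuniv, if_pos hm]
  congr 1
  apply le_antisymm
  · -- inf over couplings of pushforwards ≤ inf over couplings of originals
    refine le_iInf₂ fun γ hγ => ?_
    obtain ⟨hγ1, hγ2⟩ := hγ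
    refine iInf₂_le_of_le (γ.map (Prod.map φX φY)) ⟨?_, ?_⟩ ?_
    · rw [Measure.map_map measurable_fst (hφX.prodMap hφY)]
      have : Prod.fst ∘ Prod.map φX φY = φX ∘ Prod.fst := rfl
      rw [this, ← Measure.map_map hφX measurable_fst, hγ1]
    · rw [Measure.map_map measurable_snd (hφX.prodMap hφY)]
      have : Prod.snd ∘ Prod.map φX φY = φY ∘ Prod.snd := rfl
      rw [this, ← Measure.map_map hφY measurable_snd]
      exact Measure.map_mono hγ2 hφY
    · refine le_of_eq ?_
      rw [lintegral_map ?_ (hφX.prodMap hφY)]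
      · rfl
      · exact ENNReal.measurable_ofReal.comp measurable_dist
  · -- inf over couplings of originals ≤ inf over couplings of pushforwards
    refine le_iInf₂ fun γ hγ => ?_
    obtain ⟨γ', h1, h2, h3⟩ := uot_lift_coupling φX φY hφX hφY μX μY
      (fun z w => ENNReal.ofReal (dist z w)) γ hγ.1 hγ.2
    exact iInf₂_le_of_le γ' ⟨h1, h2⟩ h3
end

section
/- Let S be a metric space and f: S → ℝⁿ be bounded and Lipschitz. For measures μ, ν ∈ M_{≤1}(S) with ‖ν‖ ≤ ‖μ‖ and any coupling γ ∈ Γ(ν,μ): ‖∫_S f dμ − ∫_S f dν‖₂ ≤ (‖f‖_∞ + Lip(f)) · ((‖μ‖ − ‖ν‖) + ∫_{S×S} d(x,y) dγ(x,y)). -/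
open MeasureTheory
open scoped ENNReal NNReal

/-- For a bounded Lipschitz `f : S → ℝⁿ`, measures `ν ≤`-mass `μ` of total mass at most
one and any unbalanced coupling `γ ∈ Γ(ν, μ)`:
`‖∫ f dμ − ∫ f dν‖₂ ≤ (‖f‖_∞ + Lip(f)) · ((‖μ‖ − ‖ν‖) + ∫ d(x,y) dγ)`. -/
theorem integral_diff_le_BL_transport {S : Type*} [MetricSpace S] [MeasurableSpace S]
    [BorelSpace S] (n : ℕ)
    (f : S → EuclideanSpace ℝ (Fin n)) (C : ℝ) (K : ℝ≥0)
    (hC : ∀ x, ‖f x‖ ≤ C) (hK : LipschitzWith K f)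
    (μ ν : Measure S) (hμ : μ Set.univ ≤ 1) (hν : ν Set.univ ≤ 1)
    (hm : ν Set.univ ≤ μ Set.univ)
    (γ : Measure (S × S)) (h1 : γ.map Prod.fst = ν) (h2 : γ.map Prod.snd ≤ μ) :
    ENNReal.ofReal ‖∫ x, f x ∂μ - ∫ x, f x ∂ν‖ ≤
      ENNReal.ofReal (C + (K : ℝ)) *
        ((μ Set.univ - ν Set.univ) + ∫⁻ q, ENNReal.ofReal (dist q.1 q.2) ∂γ) := by
  by_cases hf0 : ∀ x, f x = 0
  · have : f = fun _ => 0 := funext hf0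
    rw [this]
    simp
  · push_neg at hf0
    obtain ⟨x0, hx0⟩ := hf0
    have hC0 : 0 < C := lt_of_lt_of_le (norm_pos_iff.mpr hx0) (hC x0)
    have hCK0 : 0 < C + (K : ℝ) := by positivity
    haveI : IsFiniteMeasure μ := ⟨lt_of_le_of_lt hμ ENNReal.one_lt_top⟩
    haveI : IsFiniteMeasure ν := ⟨lt_of_le_of_lt hν ENNReal.one_lt_top⟩
    have hγuniv : γ Set.univ = ν Set.univ := by
      rw [← h1, Measure.map_apply measurable_fst MeasurableSet.univ]
      rfl
    haveI : IsFiniteMeasure γ := ⟨by rw [hγuniv]; exact lt_of_le_of_lt hν ENNReal.one_lt_top⟩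
    by_cases hfin : ∫⁻ q, ENNReal.ofReal (dist q.1 q.2) ∂γ = ⊤
    · rw [hfin, add_top, ENNReal.mul_top (ENNReal.ofReal_pos.mpr hCK0).ne']
      exact le_top
    · set η := γ.map Prod.snd with hηdef
      haveI : IsFiniteMeasure η := by
        refine ⟨lt_of_le_of_lt ?_ (measure_lt_top μ Set.univ)⟩
        exact h2 Set.univ
      haveI : IsFiniteMeasure (μ - η) := by
        refine ⟨lt_of_le_of_lt ?_ (measure_lt_top μ Set.univ)⟩
        exact Measure.sub_le Set.univ
      have hηuniv : η Set.univ = ν Set.univ := by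
        rw [hηdef, Measure.map_apply measurable_snd MeasurableSet.univ]
        simpa using hγuniv
      have hfc : Continuous f := hK.continuous
      have hint : ∀ (m : Measure S) [IsFiniteMeasure m], Integrable f m := fun m _ =>
        (integrable_const C).mono' hfc.aestronglyMeasurable (ae_of_all _ hC)
      have hsplit : ∫ x, f x ∂μ = ∫ x, f x ∂(μ - η) + ∫ x, f x ∂η := by
        rw [← integral_add_measure (hint _) (hint _), Measure.sub_add_cancel_of_le h2]
      have hν' : ∫ x, f x ∂ν = ∫ q, f q.1 ∂γ := by
        rw [← h1, integral_map measurable_fst.aemeasurable hfc.aestronglyMeasurable]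
      have hη' : ∫ x, f x ∂η = ∫ q, f q.2 ∂γ :=
        integral_map measurable_snd.aemeasurable hfc.aestronglyMeasurable
      have hint1 : Integrable (fun q : S × S => f q.1) γ :=
        (integrable_const C).mono' (hfc.aestronglyMeasurable.comp_measurable measurable_fst)
          (ae_of_all _ fun q => hC q.1)
      have hint2 : Integrable (fun q : S × S => f q.2) γ :=
        (integrable_const C).mono' (hfc.aestronglyMeasurable.comp_measurable measurable_snd)
          (ae_of_all _ fun q => hC q.2)
      set a : ℝ := (μ Set.univ - ν Set.univ).toReal with ha
      set b : ℝ := (∫⁻ q, ENNReal.ofReal (dist q.1 q.2) ∂γ).toReal with hb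
      have hgm : AEStronglyMeasurable (fun q : S × S => ‖f q.2 - f q.1‖) γ :=
        (hint2.aestronglyMeasurable.sub hint1.aestronglyMeasurable).norm
      have hglint : ∫⁻ q, ENNReal.ofReal ‖f q.2 - f q.1‖ ∂γ ≤
          (K : ℝ≥0∞) * ∫⁻ q, ENNReal.ofReal (dist q.1 q.2) ∂γ := by
        rw [← lintegral_const_mul' _ _ ENNReal.coe_ne_top]
        refine lintegral_mono fun q => ?_
        calc ENNReal.ofReal ‖f q.2 - f q.1‖
            ≤ ENNReal.ofReal ((K : ℝ) * dist q.1 q.2) := by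
              refine ENNReal.ofReal_le_ofReal ?_
              rw [← dist_eq_norm]
              simpa [dist_comm] using hK.dist_le_mul q.1 q.2
          _ = (K : ℝ≥0∞) * ENNReal.ofReal (dist q.1 q.2) := by
              rw [ENNReal.ofReal_mul K.coe_nonneg, ENNReal.ofReal_coe_nnreal]
      have hAnorm : ‖∫ x, f x ∂(μ - η)‖ ≤ C * a := by
        have := norm_integral_le_of_norm_le_const (μ := μ - η) (ae_of_all _ hC)
        rwa [measureReal_def, Measure.sub_apply MeasurableSet.univ h2, hηuniv] at this
      have hDnorm : ‖∫ q, (f q.2 - f q.1) ∂γ‖ ≤ (K : ℝ) * b := by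
        calc ‖∫ q, (f q.2 - f q.1) ∂γ‖ ≤ ∫ q, ‖f q.2 - f q.1‖ ∂γ :=
              norm_integral_le_integral_norm _
          _ = (∫⁻ q, ENNReal.ofReal ‖f q.2 - f q.1‖ ∂γ).toReal :=
              integral_eq_lintegral_of_nonneg_ae (ae_of_all _ fun q => norm_nonneg _) hgm
          _ ≤ ((K : ℝ≥0∞) * ∫⁻ q, ENNReal.ofReal (dist q.1 q.2) ∂γ).toReal :=
              ENNReal.toReal_mono (ENNReal.mul_ne_top ENNReal.coe_ne_top hfin) hglint
          _ = (K : ℝ) * b := by rw [ENNReal.toReal_mul, ENNReal.coe_toReal, hb]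
      have hkey : ‖∫ x, f x ∂μ - ∫ x, f x ∂ν‖ ≤ (C + (K : ℝ)) * (a + b) := by
        have hdiff : ∫ x, f x ∂μ - ∫ x, f x ∂ν =
            ∫ x, f x ∂(μ - η) + ∫ q, (f q.2 - f q.1) ∂γ := by
          rw [hsplit, hν', hη', integral_sub hint2 hint1]
          abel
        rw [hdiff]
        have ha0 : 0 ≤ a := ENNReal.toReal_nonneg
        have hb0 : 0 ≤ b := ENNReal.toReal_nonneg
        calc ‖∫ x, f x ∂(μ - η) + ∫ q, (f q.2 - f q.1) ∂γ‖
            ≤ C * a + (K : ℝ) * b := (norm_add_le _ _).trans (add_le_add hAnorm hDnorm)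
          _ ≤ (C + (K : ℝ)) * (a + b) := by nlinarith [K.coe_nonneg]
      calc ENNReal.ofReal ‖∫ x, f x ∂μ - ∫ x, f x ∂ν‖
          ≤ ENNReal.ofReal ((C + (K : ℝ)) * (a + b)) := ENNReal.ofReal_le_ofReal hkey
        _ = ENNReal.ofReal (C + (K : ℝ)) * (ENNReal.ofReal a + ENNReal.ofReal b) := by
            rw [ENNReal.ofReal_mul hCK0.le, ENNReal.ofReal_add ENNReal.toReal_nonneg
              ENNReal.toReal_nonneg]
        _ = _ := by
            rw [ha, hb, ENNReal.ofReal_toReal, ENNReal.ofReal_toReal hfin]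
            exact (tsub_le_self.trans_lt (measure_lt_top μ _)).ne
end
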